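/- The translation T_? of LK into INC is conservative: if Δ and Γ contain only formulas of classical logic CL and the sequent T_?(Δ) ⊢ ?T_?(Γ) is provable in INC, then Δ ⊢ Γ is provable in LK. -/

import Mathlib

set_option autoImplicit true

/-- Formulas of classical propositional logic CL. -/
inductive CLF : Type
  | var : ℕ → CLF
  | tt : CLF
  | ff : CLF
  | and : CLF → CLF → CLF
  | or : CLF → CLF → CLF
  | imp : CLF → CLF → CLF

/-- `LK c Δ Γ` : the sequent `Δ ⊢ Γ` is provable in the classical sequent
calculus LK; the flag `c` permits the Cut rule (`LK true` is full LK,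
`LK false` is the cut-free fragment). -/
inductive LK : Bool → List CLF → List CLF → Prop
  | xl : LK c (Δ ++ A :: A' :: Δ') Γ → LK c (Δ ++ A' :: A :: Δ') Γ
  | xr : LK c Δ (Γ ++ B :: B' :: Γ') → LK c Δ (Γ ++ B' :: B :: Γ')
  | wl : LK c Δ Γ → LK c (Δ ++ [A]) Γ
  | wr : LK c Δ Γ → LK c Δ (B :: Γ)
  | cl : LK c (Δ ++ [A, A]) Γ → LK c (Δ ++ [A]) Γ
  | cr : LK c Δ (B :: B :: Γ) → LK c Δ (B :: Γ)
  | id : LK c [A] [A]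
  | cut : LK true Δ (B :: Γ) → LK true (Δ' ++ [B]) Γ' → LK true (Δ ++ Δ') (Γ ++ Γ')
  | ttL : LK c Δ Γ → LK c (Δ ++ [CLF.tt]) Γ
  | ttR : LK c [] [CLF.tt]
  | ffL : LK c [CLF.ff] []
  | ffR : LK c Δ Γ → LK c Δ (CLF.ff :: Γ)
  | andL₁ : LK c (Δ ++ [A₁]) Γ → LK c (Δ ++ [CLF.and A₁ A₂]) Γ
  | andL₂ : LK c (Δ ++ [A₂]) Γ → LK c (Δ ++ [CLF.and A₁ A₂]) Γ
  | andR : LK c Δ (B₁ :: Γ) → LK c Δ (B₂ :: Γ) → LK c Δ (CLF.and B₁ B₂ :: Γ)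
  | orL : LK c (Δ ++ [A₁]) Γ → LK c (Δ ++ [A₂]) Γ → LK c (Δ ++ [CLF.or A₁ A₂]) Γ
  | orR₁ : LK c Δ (B₁ :: Γ) → LK c Δ (CLF.or B₁ B₂ :: Γ)
  | orR₂ : LK c Δ (B₂ :: Γ) → LK c Δ (CLF.or B₁ B₂ :: Γ)
  | impL : LK c Δ (A :: Γ) → LK c (Δ ++ [B]) Γ → LK c (Δ ++ [CLF.imp A B]) Γ
  | impR : LK c (Δ ++ [A]) (B :: Γ) → LK c Δ (CLF.imp A B :: Γ)
/-- Formulas of intuitionistic logic extended (IL^e). -/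
inductive GF : Type
  | var : ℕ → GF
  | top : GF
  | ff : GF
  | withc : GF → GF → GF
  | or : GF → GF → GF
  | imp : GF → GF → GF
  | wn : GF → GF

/-- `INC c Δ Γ` : the sequent `Δ ⊢ Γ` is provable in the sequent calculus INC
for IL^e; the flag `c` permits the cut rule Cut^?. -/
inductive INC : Bool → List GF → List GF → Prop
  | xl : INC c (Δ ++ A :: A' :: Δ') Γ → INC c (Δ ++ A' :: A :: Δ') Γ
  | xr : INC c Δ (Γ ++ B :: B' :: Γ') → INC c Δ (Γ ++ B' :: B :: Γ')
  | wl : INC c Δ Γ → INC c (Δ ++ [A]) Γ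
  | wnW : INC c Δ Γ → INC c Δ (GF.wn B :: Γ)
  | cl : INC c (Δ ++ [A, A]) Γ → INC c (Δ ++ [A]) Γ
  | wnC : INC c Δ (GF.wn B :: GF.wn B :: Γ) → INC c Δ (GF.wn B :: Γ)
  | wnD : INC c Δ (B :: Γ) → INC c Δ (GF.wn B :: Γ)
  | wnL : INC c (Δ ++ [A]) (List.map GF.wn Γ) → INC c (Δ ++ [GF.wn A]) (List.map GF.wn Γ)
  | id : INC c [A] [A]
  | cut : INC true Δ (GF.wn B :: List.map GF.wn Γ) → INC true (Δ' ++ [B]) (List.map GF.wn Γ') →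
      INC true (Δ ++ Δ') (List.map GF.wn Γ ++ List.map GF.wn Γ')
  | topL : INC c Δ Γ → INC c (Δ ++ [GF.top]) Γ
  | topR : INC c [] [GF.top]
  | ffL : INC c [GF.ff] []
  | ffR : INC c Δ (List.map GF.wn Γ) → INC c Δ (GF.ff :: List.map GF.wn Γ)
  | withL₁ : INC c (Δ ++ [A₁]) Γ → INC c (Δ ++ [GF.withc A₁ A₂]) Γ
  | withL₂ : INC c (Δ ++ [A₂]) Γ → INC c (Δ ++ [GF.withc A₁ A₂]) Γ
  | withR : INC c Δ (B₁ :: List.map GF.wn Γ) → INC c Δ (B₂ :: List.map GF.wn Γ) →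
      INC c Δ (GF.withc B₁ B₂ :: List.map GF.wn Γ)
  | orL : INC c (Δ ++ [A₁]) Γ → INC c (Δ ++ [A₂]) Γ → INC c (Δ ++ [GF.or A₁ A₂]) Γ
  | orR₁ : INC c Δ (B₁ :: List.map GF.wn Γ) → INC c Δ (GF.or B₁ B₂ :: List.map GF.wn Γ)
  | orR₂ : INC c Δ (B₂ :: List.map GF.wn Γ) → INC c Δ (GF.or B₁ B₂ :: List.map GF.wn Γ)
  | impL : INC c (Δ ++ [B]) Γ → INC c Θ (A :: List.map GF.wn Ξ) →
      INC c (Δ ++ Θ ++ [GF.imp A B]) (Γ ++ List.map GF.wn Ξ)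
  | impR : INC c (Δ ++ [A]) (B :: List.map GF.wn Γ) → INC c Δ (GF.imp A B :: List.map GF.wn Γ)

/-- The translation T_? of classical formulas into IL^e-formulas. -/
def Twn : CLF → GF
  | CLF.var n => GF.var n
  | CLF.tt => GF.wn GF.top
  | CLF.ff => GF.ff
  | CLF.and A B => GF.withc (GF.wn (Twn A)) (GF.wn (Twn B))
  | CLF.or A B => GF.or (Twn A) (Twn B)
  | CLF.imp A B => GF.imp (Twn A) (GF.wn (Twn B))

/-- Backward translation erasing the exponential. -/
def U : GF → CLF
  | GF.var n => CLF.var n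
  | GF.top => CLF.tt
  | GF.ff => CLF.ff
  | GF.withc A B => CLF.and (U A) (U B)
  | GF.or A B => CLF.or (U A) (U B)
  | GF.imp A B => CLF.imp (U A) (U B)
  | GF.wn A => U A

@[simp] lemma U_wn (A : GF) : U (GF.wn A) = U A := rfl

@[simp] lemma U_Twn (A : CLF) : U (Twn A) = A := by
  induction A <;> simp [Twn, U, *]

@[simp] lemma map_U_map_wn (Γ : List GF) :
    (Γ.map GF.wn).map U = Γ.map U := by
  simp [List.map_map, Function.comp_def]

lemma lk_permL_aux {l l' : List CLF} (p : l.Perm l') :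
    ∀ pre Γ c, LK c (pre ++ l) Γ → LK c (pre ++ l') Γ := by
  induction p with
  | nil => intro pre Γ c h; exact h
  | cons a p ih =>
      intro pre Γ c h
      have := ih (pre ++ [a]) Γ c (by simpa using h)
      simpa using this
  | swap a b t =>
      intro pre Γ c h
      exact LK.xl h
  | trans p q ih1 ih2 =>
      intro pre Γ c h
      exact ih2 pre Γ c (ih1 pre Γ c h)

lemma lk_permL {Δ Δ' Γ : List CLF} {c : Bool} (p : Δ.Perm Δ') (h : LK c Δ Γ) :
    LK c Δ' Γ := by
  have := lk_permL_aux p [] Γ c (by simpa using h)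
  simpa using this

lemma lk_permR_aux {l l' : List CLF} (p : l.Perm l') :
    ∀ pre Δ c, LK c Δ (pre ++ l) → LK c Δ (pre ++ l') := by
  induction p with
  | nil => intro pre Δ c h; exact h
  | cons a p ih =>
      intro pre Δ c h
      have := ih (pre ++ [a]) Δ c (by simpa using h)
      simpa using this
  | swap a b t =>
      intro pre Δ c h
      exact LK.xr h
  | trans p q ih1 ih2 =>
      intro pre Δ c h
      exact ih2 pre Δ c (ih1 pre Δ c h)

lemma lk_permR {Δ Γ Γ' : List CLF} {c : Bool} (p : Γ.Perm Γ') (h : LK c Δ Γ) :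
    LK c Δ Γ' := by
  have := lk_permR_aux p [] Δ c (by simpa using h)
  simpa using this

lemma lk_weakL_list {Δ Γ : List CLF} {c : Bool} (Θ : List CLF) (h : LK c Δ Γ) :
    LK c (Δ ++ Θ) Γ := by
  induction Θ using List.reverseRecOn with
  | nil => simpa using h
  | append_singleton Θ a ih =>
      have := LK.wl (A := a) ih
      simpa [List.append_assoc] using this

lemma lk_weakR_list {Δ Γ : List CLF} {c : Bool} (Θ : List CLF) (h : LK c Δ Γ) :
    LK c Δ (Θ ++ Γ) := by
  induction Θ with
  | nil => simpa using h
  | cons a Θ ih => exact LK.wr ih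

lemma inc_to_lk {c : Bool} {Δ Γ : List GF} (h : INC c Δ Γ) :
    LK true (Δ.map U) (Γ.map U) := by
  induction h with
  | xl h ih =>
      simp only [List.map_append, List.map_cons] at ih ⊢
      exact LK.xl ih
  | xr h ih =>
      simp only [List.map_append, List.map_cons] at ih ⊢
      exact LK.xr ih
  | wl h ih =>
      simpa using LK.wl ih
  | wnW h ih =>
      simpa using LK.wr ih
  | cl h ih =>
      simp only [List.map_append, List.map_cons, List.map_nil] at ih ⊢
      exact LK.cl ih
  | wnC h ih =>
      simp only [List.map_cons, U_wn] at ih ⊢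
      exact LK.cr ih
  | wnD h ih =>
      simpa using ih
  | wnL h ih =>
      simpa using ih
  | id =>
      exact LK.id
  | cut h1 h2 ih1 ih2 =>
      simp only [List.map_append, List.map_cons, map_U_map_wn, U_wn] at ih1 ih2 ⊢
      exact LK.cut ih1 ih2
  | topL h ih =>
      simpa [U] using LK.ttL ih
  | topR =>
      simpa [U] using LK.ttR (c := true)
  | ffL =>
      simpa [U] using LK.ffL (c := true)
  | ffR h ih =>
      simp only [List.map_cons, map_U_map_wn, U] at ih ⊢
      exact LK.ffR ih
  | withL₁ h ih =>
      simp only [List.map_append, List.map_cons, List.map_nil, U] at ih ⊢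
      exact LK.andL₁ ih
  | withL₂ h ih =>
      simp only [List.map_append, List.map_cons, List.map_nil, U] at ih ⊢
      exact LK.andL₂ ih
  | withR h1 h2 ih1 ih2 =>
      simp only [List.map_cons, map_U_map_wn, U] at ih1 ih2 ⊢
      exact LK.andR ih1 ih2
  | orL h1 h2 ih1 ih2 =>
      simp only [List.map_append, List.map_cons, List.map_nil, U] at ih1 ih2 ⊢
      exact LK.orL ih1 ih2
  | orR₁ h ih =>
      simp only [List.map_cons, map_U_map_wn, U] at ih ⊢
      exact LK.orR₁ ih
  | orR₂ h ih =>
      simp only [List.map_cons, map_U_map_wn, U] at ih ⊢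
      exact LK.orR₂ ih
  | @impL _ Δ' B' Γ' Θ' A' Ξ' h1 h2 ih1 ih2 =>
      simp only [List.map_append, List.map_cons, List.map_nil, map_U_map_wn, U] at ih1 ih2 ⊢
      -- ih1 : LK true (Δ'.map U ++ [U B']) (Γ'.map U)
      -- ih2 : LK true (Θ'.map U) (U A' :: Ξ'.map U)
      -- goal : LK true (Δ'.map U ++ Θ'.map U ++ [CLF.imp (U A') (U B')]) (Γ'.map U ++ Ξ'.map U)
      have h2' : LK true (Δ'.map U ++ Θ'.map U) (U A' :: (Γ'.map U ++ Ξ'.map U)) := by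
        have w1 : LK true (Θ'.map U) (Γ'.map U ++ (U A' :: Ξ'.map U)) :=
          lk_weakR_list _ ih2
        have w2 : LK true (Δ'.map U ++ Θ'.map U) (Γ'.map U ++ (U A' :: Ξ'.map U)) := by
          have := lk_weakL_list (Δ := Θ'.map U) (Δ'.map U) w1
          exact lk_permL (List.perm_append_comm) this
        refine lk_permR ?_ w2
        exact List.perm_middle
      have h1' : LK true (Δ'.map U ++ Θ'.map U ++ [U B']) (Γ'.map U ++ Ξ'.map U) := by
        have w1 : LK true (Δ'.map U ++ [U B'] ++ Θ'.map U) (Γ'.map U) :=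
          lk_weakL_list _ ih1
        have w2 : LK true (Δ'.map U ++ [U B'] ++ Θ'.map U) (Γ'.map U ++ Ξ'.map U) := by
          refine lk_permR (List.perm_append_comm) ?_
          exact lk_weakR_list _ w1
        refine lk_permL ?_ w2
        have p : ([U B'] ++ Θ'.map U).Perm (Θ'.map U ++ [U B']) := List.perm_append_comm
        simpa [List.append_assoc] using p.append_left (Δ'.map U)
      exact LK.impL h2' h1'
  | impR h ih =>
      simp only [List.map_append, List.map_cons, List.map_nil, map_U_map_wn, U, U_wn] at ih ⊢
      exact LK.impR ih

/-- The translation T_? of LK into INC is conservative: if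
`T_?(Δ) ⊢ ?T_?(Γ)` is provable in INC, then `Δ ⊢ Γ` is provable in LK. -/
theorem inc_conservative_over_lk (Δ Γ : List CLF) :
    INC true (Δ.map Twn) (Γ.map fun A => GF.wn (Twn A)) → LK true Δ Γ := by
  intro h
  have := inc_to_lk h
  simpa [Function.comp_def] using this
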